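/- In a conforming history, if a packet k on channel from process P to process Q is dropped (sent but never received), then P halts or Q halts. -/
import Mathlib


/-- In a conforming history, if a packet `k` on the channel from process `src k` to
process `tgt k` is dropped (sent but never received, hence never dequeued), then the
source process halts or the target process halts.  The hypotheses are the relevant model
axioms: channels are FIFO, send events at a process are linearly ordered and very well
founded, no two packets of a multicast share a channel, a dropped packet has no
dequeuing event, the Conforming Channel Axiom (a finite channel has a removed source or
a halting target), and the Conforming Halt Axiom (removed processes halt). -/
theorem dropped_packet_implies_halt
    {Proc Packet Event : Type*} [PartialOrder Event]
    (src tgt : Packet → Proc)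
    (send : Packet → Event)
    (recv : Packet → Option Event)
    (sent : Packet → Prop)
    (halts removed : Proc → Prop)
    -- events at a process are linearly ordered
    (hlin : ∀ k k' : Packet, src k = src k' → send k ≤ send k' ∨ send k' ≤ send k)
    -- no two packets of one multicast belong to the same channel
    (hinj : ∀ k k' : Packet, src k = src k' → tgt k = tgt k' → send k = send k' → k = k')
    -- Packet Order Axiom: channels are FIFO
    (fifo : ∀ k k' : Packet, src k = src k' → tgt k = tgt k' →
        send k < send k' → (recv k').isSome → (recv k).isSome)
    -- Order Foundation Axiom: only finitely many packets are queued before a given one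
    (foundation : ∀ k : Packet, {k' : Packet | src k' = src k ∧ send k' < send k}.Finite)
    -- Conforming Channel Axiom
    (confChannel : ∀ P Q : Proc,
        {k : Packet | src k = P ∧ tgt k = Q ∧ (recv k).isSome}.Finite →
        removed P ∨ halts Q)
    -- Conforming Halt Axiom
    (confHalt : ∀ P : Proc, removed P → halts P)
    (k : Packet) (hsent : sent k) (hdrop : recv k = none) :
    halts (src k) ∨ halts (tgt k) := by
  have hfin : {k' : Packet | src k' = src k ∧ tgt k' = tgt k ∧ (recv k').isSome}.Finite := by
    apply (foundation k).subset
    rintro k' ⟨hs, ht, hr⟩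
    refine ⟨hs, ?_⟩
    rcases hlin k k' hs.symm with h | h
    · rcases lt_or_eq_of_le h with h | h
      · exact absurd (fifo k k' hs.symm ht.symm h hr) (by simp [hdrop])
      · exact absurd (hinj k k' hs.symm ht.symm h ▸ hr) (by simp [hdrop])
    · rcases lt_or_eq_of_le h with h | h
      · exact h
      · exact absurd (hinj k' k hs ht h ▸ hr) (by simp [hdrop])
  rcases confChannel (src k) (tgt k) hfin with h | h
  · exact Or.inl (confHalt _ h)
  · exact Or.inr h
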